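/- Let $\{Y_n\}_{n\in\mathbb{N}}$ be a sequence of positive real numbers, bounded above by some constant $M$, satisfying the reverse recursive inequality $Y_n \le C b^n Y_{n+1}^{1-\alpha}$ for all $n$, where $\alpha \in (0,1)$ and $C, b > 1$. Then $Y_0 \le \left( \frac{2C}{b^{1-1/\alpha}} \right)^{1/\alpha}$. -/

import Mathlib

theorem reverse_iteration_lemma
    (Y : ℕ → ℝ) (C b α M : ℝ)
    (hC : 1 < C) (hb : 1 < b) (hα : α ∈ Set.Ioo (0:ℝ) 1)
    (hM : 0 < M) (hbound : ∀ n, 0 < Y n ∧ Y n ≤ M)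
    (hrec : ∀ n, Y n ≤ C * b ^ n * (Y (n + 1)) ^ (1 - α)) :
    Y 0 ≤ (2 * C / b ^ (1 - 1 / α)) ^ (1 / α) := by
  obtain ⟨hα0, hα1⟩ := hα
  set r : ℝ := 1 - α with hr
  have hr0 : 0 < r := by simp [hr]; linarith
  have hr1 : r < 1 := by simp [hr]; linarith
  have hC0 : (0:ℝ) < C := by linarith
  have hb0 : (0:ℝ) < b := by linarith
  set K : ℝ := max M 1 with hK
  have hK1 : (1:ℝ) ≤ K := le_max_right _ _
  have hK0 : (0:ℝ) < K := lt_of_lt_of_le one_pos hK1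
  have hYK : ∀ n, Y n ≤ K := fun n => (hbound n).2.trans (le_max_left _ _)
  set S : ℕ → ℝ := fun n => ∑ i ∈ Finset.range n, r ^ i with hS
  set T : ℕ → ℝ := fun n => ∑ i ∈ Finset.range n, (i : ℝ) * r ^ i with hT
  -- main induction
  have key : ∀ n, Y 0 ≤ C ^ (S n) * b ^ (T n) * (Y n) ^ (r ^ n) := by
    intro n
    induction n with
    | zero => simp [hS, hT]
    | succ n ih =>
      have hYn1 := (hbound (n+1)).1
      have h1 : (Y n) ^ (r ^ n) ≤ (C * b ^ n * (Y (n+1)) ^ r) ^ (r ^ n) :=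
        Real.rpow_le_rpow (le_of_lt (hbound n).1) (hrec n) (by positivity)
      have h2 : (C * b ^ n * (Y (n+1)) ^ r) ^ (r ^ n)
          = C ^ (r ^ n) * b ^ ((n : ℝ) * r ^ n) * (Y (n+1)) ^ (r ^ (n+1)) := by
        rw [Real.mul_rpow (by positivity) (by positivity),
            Real.mul_rpow (by positivity) (by positivity)]
        congr 1
        · congr 1
          rw [← Real.rpow_natCast b n, ← Real.rpow_mul (le_of_lt hb0)]
        · rw [pow_succ', Real.rpow_mul (le_of_lt hYn1)]
      have h3 : Y 0 ≤ C ^ (S n) * b ^ (T n) * (C ^ (r ^ n) * b ^ ((n : ℝ) * r ^ n) * (Y (n+1)) ^ (r ^ (n+1))) := by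
        calc Y 0 ≤ C ^ (S n) * b ^ (T n) * (Y n) ^ (r ^ n) := ih
        _ ≤ C ^ (S n) * b ^ (T n) * (C ^ (r ^ n) * b ^ ((n : ℝ) * r ^ n) * (Y (n+1)) ^ (r ^ (n+1))) := by
            rw [← h2]
            exact mul_le_mul_of_nonneg_left h1 (by positivity)
      calc Y 0 ≤ C ^ (S n) * b ^ (T n) * (C ^ (r ^ n) * b ^ ((n : ℝ) * r ^ n) * (Y (n+1)) ^ (r ^ (n+1))) := h3
      _ = C ^ (S (n+1)) * b ^ (T (n+1)) * (Y (n+1)) ^ (r ^ (n+1)) := by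
          rw [hS, hT]
          simp only [Finset.sum_range_succ]
          rw [Real.rpow_add hC0, Real.rpow_add hb0]
          ring
  -- sum bounds
  have hgeom : HasSum (fun i : ℕ => r ^ i) (1 / (1 - r)) := by
    simpa using hasSum_geometric_of_lt_one (le_of_lt hr0) hr1
  have hgeom2 : HasSum (fun i : ℕ => (i : ℝ) * r ^ i) (r / (1 - r) ^ 2) :=
    hasSum_coe_mul_geometric_of_norm_lt_one (by rw [Real.norm_eq_abs, abs_of_pos hr0]; exact hr1)
  have hSle : ∀ n, S n ≤ 1 / α := by
    intro n
    have := sum_le_hasSum (Finset.range n) (fun i _ => by positivity) hgeom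
    simpa [hS, hr] using this
  have hTle : ∀ n, T n ≤ r / α ^ 2 := by
    intro n
    have := sum_le_hasSum (Finset.range n) (fun i _ => by positivity) hgeom2
    simpa [hT, hr] using this
  set L : ℝ := C ^ (1/α) * b ^ (r / α ^ 2) with hL
  have keyn : ∀ n, Y 0 ≤ L * K ^ (r ^ n) := by
    intro n
    calc Y 0 ≤ C ^ (S n) * b ^ (T n) * (Y n) ^ (r ^ n) := key n
    _ ≤ L * K ^ (r ^ n) := by
        rw [hL]
        have h1 : C ^ (S n) ≤ C ^ (1/α) :=
          Real.rpow_le_rpow_left_iff hC |>.mpr (hSle n)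
        have h2 : b ^ (T n) ≤ b ^ (r / α ^ 2) :=
          Real.rpow_le_rpow_left_iff hb |>.mpr (hTle n)
        have h3 : (Y n) ^ (r ^ n) ≤ K ^ (r ^ n) :=
          Real.rpow_le_rpow (le_of_lt (hbound n).1) (hYK n) (by positivity)
        have := mul_le_mul (mul_le_mul h1 h2 (by positivity) (by positivity)) h3
          (Real.rpow_nonneg (le_of_lt (hbound n).1) _) (by positivity)
        linarith [this]
  -- take limit
  have hlim : Filter.Tendsto (fun n => L * K ^ (r ^ n)) Filter.atTop (nhds L) := by
    have h0 : Filter.Tendsto (fun n : ℕ => r ^ n) Filter.atTop (nhds 0) :=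
      tendsto_pow_atTop_nhds_zero_of_lt_one (le_of_lt hr0) hr1
    have h1 : Filter.Tendsto (fun n : ℕ => K ^ (r ^ n)) Filter.atTop (nhds 1) := by
      have heq : (fun n : ℕ => K ^ (r ^ n)) = fun n => Real.exp (Real.log K * r ^ n) := by
        funext n; rw [Real.rpow_def_of_pos hK0]
      rw [heq]
      have h2 : Filter.Tendsto (fun n : ℕ => Real.log K * r ^ n) Filter.atTop (nhds 0) := by
        simpa using h0.const_mul (Real.log K)
      simpa [Function.comp_def] using (Real.continuous_exp.tendsto 0).comp h2
    have := h1.const_mul L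
    simpa using this
  have hY0L : Y 0 ≤ L := ge_of_tendsto' hlim keyn
  -- compare L with RHS
  have hrhs : (2 * C / b ^ (1 - 1 / α)) ^ (1 / α) = (2*C) ^ (1/α) * b ^ (r / α ^ 2) := by
    rw [Real.div_rpow (by positivity) (by positivity)]
    rw [← Real.rpow_mul (le_of_lt hb0)]
    rw [div_eq_mul_inv, ← Real.rpow_neg (le_of_lt hb0)]
    congr 1
    field_simp [hr]
    congr 1
    rw [hr]
    field_simp
    ring
  rw [hrhs]
  refine hY0L.trans ?_
  rw [hL]
  have : C ^ (1/α) ≤ (2*C) ^ (1/α) :=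
    Real.rpow_le_rpow (le_of_lt hC0) (by linarith) (by positivity)
  exact mul_le_mul_of_nonneg_right this (by positivity)
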